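/- Let Q be a type A_n quiver and I=[x_1,x_2], J=[y_1,y_2] intervals with x_2 <= y_2 and I \cap J = [z, x_2] nonempty (so z = max(x_1,y_1)). Then \chi_Q(d_I, d_J) = 1 - d_I(t(a_{z-1})) d_J(h(a_{z-1})) - d_I(t(a_{x_2})) d_J(h(a_{x_2})), where terms with out-of-range arrow indices (z-1 = 0 or x_2 = n) are interpreted as 0. -/

import Mathlib

/-- For a type `Aₙ` quiver, arrow `aᵢ` joins vertices `i` and `i+1`; `dir i = true`
means `aᵢ` points right.  `tail dir i` is the tail of `aᵢ`. -/
def qtail (dir : ℕ → Bool) (i : ℕ) : ℕ := if dir i then i else i + 1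

/-- The head of the arrow `aᵢ`. -/
def qhead (dir : ℕ → Bool) (i : ℕ) : ℕ := if dir i then i + 1 else i

/-- The indicator dimension vector of the interval `[a,b]`. -/
def ind (a b x : ℕ) : ℤ := if a ≤ x ∧ x ≤ b then 1 else 0

/-- The Euler form of a type `Aₙ` quiver with arrow directions `dir`:
`χ(d₁,d₂) = ∑ₓ d₁(x)d₂(x) - ∑ₐ d₁(t(a))d₂(h(a))`. -/
def euler (n : ℕ) (dir : ℕ → Bool) (d1 d2 : ℕ → ℤ) : ℤ :=
  (∑ x ∈ Finset.Icc 1 n, d1 x * d2 x) -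
    ∑ i ∈ Finset.Icc 1 (n - 1), d1 (qtail dir i) * d2 (qhead dir i)

/-- For intervals `I=[x₁,x₂]`, `J=[y₁,y₂]` with `x₂ ≤ y₂` and nonempty intersection
`[z,x₂]` where `z = max x₁ y₁`:
`χ_Q(d_I,d_J) = 1 - d_I(t(a_{z-1}))d_J(h(a_{z-1})) - d_I(t(a_{x₂}))d_J(h(a_{x₂}))`,
with out-of-range arrow terms (`z-1 = 0` or `x₂ = n`) interpreted as `0`. -/
theorem euler_overlap (n x1 x2 y1 y2 : ℕ) (dir : ℕ → Bool)
    (h1 : 1 ≤ x1) (h2 : x1 ≤ x2) (h3 : 1 ≤ y1) (h4 : y1 ≤ y2) (h5 : y2 ≤ n)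
    (h6 : x2 ≤ y2) (hint : max x1 y1 ≤ x2) :
    euler n dir (ind x1 x2) (ind y1 y2) =
      1 - (if max x1 y1 = 1 then 0 else
            ind x1 x2 (qtail dir (max x1 y1 - 1)) * ind y1 y2 (qhead dir (max x1 y1 - 1)))
        - (if x2 = n then 0 else
            ind x1 x2 (qtail dir x2) * ind y1 y2 (qhead dir x2)) := by
  set z := max x1 y1 with hz
  set f : ℕ → ℤ := fun i => ind x1 x2 (qtail dir i) * ind y1 y2 (qhead dir i) with hf
  have hz1 : 1 ≤ z := le_trans h1 (le_max_left _ _)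
  -- first sum
  have hsum1 : (∑ x ∈ Finset.Icc 1 n, ind x1 x2 x * ind y1 y2 x) = ((x2 + 1 - z : ℕ) : ℤ) := by
    have e1 : ∀ x ∈ Finset.Icc 1 n, ind x1 x2 x * ind y1 y2 x
        = (if x ∈ Finset.Icc z x2 then (1 : ℤ) else 0) := by
      intro x _
      simp only [ind, Finset.mem_Icc]
      split_ifs <;> omega
    rw [Finset.sum_congr rfl e1, Finset.sum_ite_mem, Finset.inter_eq_right.mpr, Finset.sum_const,
      Nat.card_Icc, nsmul_eq_mul, mul_one]
    intro i hi
    simp only [Finset.mem_Icc] at *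
    omega
  -- second sum: pointwise decomposition
  have e2 : ∀ i, f i = (if i ∈ Finset.Icc z (x2 - 1) then (1 : ℤ) else 0)
      + (if i = z - 1 then f (z - 1) else 0) + (if i = x2 then f x2 else 0) := by
    intro i
    rcases eq_or_ne i (z - 1) with rfl | hiz
    · have : ¬ (z - 1 ∈ Finset.Icc z (x2 - 1)) := by simp [Finset.mem_Icc]; omega
      rw [if_neg this, if_pos rfl, if_neg (by omega)]
      ring
    · rcases eq_or_ne x2 i with rfl | hix
      · have : ¬ (x2 ∈ Finset.Icc z (x2 - 1)) := by simp [Finset.mem_Icc]; omega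
        rw [if_neg this, if_neg hiz, if_pos rfl]
        ring
      · rw [if_neg hiz, if_neg (Ne.symm hix), add_zero, add_zero]
        simp only [hf, ind, qtail, qhead, Finset.mem_Icc]
        split_ifs <;> omega
  have hsum2 : (∑ i ∈ Finset.Icc 1 (n - 1), f i)
      = ((x2 - z : ℕ) : ℤ) + (if z - 1 ∈ Finset.Icc 1 (n - 1) then f (z - 1) else 0)
        + (if x2 ∈ Finset.Icc 1 (n - 1) then f x2 else 0) := by
    rw [Finset.sum_congr rfl (fun i _ => e2 i), Finset.sum_add_distrib, Finset.sum_add_distrib,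
      Finset.sum_ite_eq' _ (z - 1), Finset.sum_ite_eq' _ x2,
      Finset.sum_ite_mem, Finset.inter_eq_right.mpr, Finset.sum_const, Nat.card_Icc,
      nsmul_eq_mul, mul_one, show x2 - 1 + 1 - z = x2 - z by omega]
    · intro i hi
      simp only [Finset.mem_Icc] at *
      omega
  have hb1 : (if z - 1 ∈ Finset.Icc 1 (n - 1) then f (z - 1) else 0)
      = (if z = 1 then 0 else f (z - 1)) := by
    simp only [Finset.mem_Icc]
    split_ifs <;> first | rfl | omega
  have hb2 : (if x2 ∈ Finset.Icc 1 (n - 1) then f x2 else 0)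
      = (if x2 = n then 0 else f x2) := by
    simp only [Finset.mem_Icc]
    split_ifs <;> first | rfl | omega
  show euler n dir (ind x1 x2) (ind y1 y2)
      = 1 - (if z = 1 then 0 else f (z - 1)) - (if x2 = n then 0 else f x2)
  rw [euler, hsum1, hsum2, hb1, hb2, Nat.cast_sub (by omega), Nat.cast_sub (by omega)]
  push_cast
  ring
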